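/- Pointwise L∞ bounds from weighted energy bounds (Lemma 3.1). Fix γ ∈ (0,1), B ≥ 0 with sup|Ψ'| ≤ B, δ, M > 0, an integer k ≥ 0 and t ∈ ℝ. Let φ be smooth on a neighborhood of {t} × ℝ and suppose that for all integers i, j ≥ 0 with i + j ≤ k + 1: ∫_ℝ Λ̄(ū(t,x))·|L L̄^i L^j φ(t,x)|² dx ≤ δ²·M² and ∫_ℝ Λ(t−x)·|L̄ L̄^i L^j φ(t,x)|² dx ≤ M², and that for i + j ≤ k one has Λ̄(ū(t,x))^{1/2}·|L L̄^i L^j φ(t,x)| → 0 as x → +∞ and Λ(t−x)^{1/2}·|L̄ L̄^i L^j φ(t,x)| → 0 as x → −∞. Then there is a constant C = C(γ, B) such that for all i + j ≤ k and all x ∈ ℝ: |L L̄^i L^j φ(t,x)| ≤ C·δ·M·Λ̄(ū(t,x))^{−1/2} and |L̄ L̄^i L^j φ(t,x)| ≤ C·M·Λ(t−x)^{−1/2}. -/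

import Mathlib

open MeasureTheory Filter Set
set_option maxHeartbeats 1000000
set_option linter.unusedSectionVars false

noncomputable section

/-- partial derivative in the first (time) variable -/
def pd1 (f : ℝ × ℝ → ℝ) (p : ℝ × ℝ) : ℝ := deriv (fun s => f (s, p.2)) p.1

/-- partial derivative in the second (space) variable -/
def pd2 (f : ℝ × ℝ → ℝ) (p : ℝ × ℝ) : ℝ := deriv (fun s => f (p.1, s)) p.2

/-- the Japanese bracket `⟨s⟩ = √(1+s²)` -/
def japb (s : ℝ) : ℝ := Real.sqrt (1 + s^2)

/-- the weight `Λ(s) = Λ̄(s) = ⟨s⟩^{2+2γ}` -/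
def Lam (γ s : ℝ) : ℝ := japb s ^ ((2:ℝ) + 2*γ)

/-- the adapted null coordinate `ū(t,x) = (t+x)/2 − (1/2)∫₀^{t−x}(Ψ'(τ))²dτ` -/
def ubar (Ψ : ℝ → ℝ) (t x : ℝ) : ℝ :=
  (t + x)/2 - (1/2) * ∫ τ in (0:ℝ)..(t - x), (deriv Ψ τ)^2

/-- the null operator `L = ∂_t + ∂_x` (the coordinate vector field `∂_ū`) -/
def Lop (f : ℝ × ℝ → ℝ) : ℝ × ℝ → ℝ := fun p => pd1 f p + pd2 f p

/-- the null operator `L̄ = ((Ψ'(t−x))²+1)/2·∂_t + ((Ψ'(t−x))²−1)/2·∂_x`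
(the coordinate vector field `∂_u`) -/
def Lbar (Ψ : ℝ → ℝ) (f : ℝ × ℝ → ℝ) : ℝ × ℝ → ℝ := fun p =>
  ((deriv Ψ (p.1 - p.2))^2 + 1)/2 * pd1 f p + ((deriv Ψ (p.1 - p.2))^2 - 1)/2 * pd2 f p

open scoped ENNReal




open scoped ContDiff in
theorem natCast_ne_infty (n : ℕ) : ((n : ℕ) : WithTop ℕ∞) ≠ ((⊤ : ℕ∞) : WithTop ℕ∞) := by
  exact_mod_cast ENat.coe_ne_top n


section PD

variable {F : Type*} [NormedAddCommGroup F] [NormedSpace ℝ F]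

/-- derivative of the first slice of a 2-variable function -/
theorem slice1_hasDerivAt {g : ℝ × ℝ → F} {g' : ℝ × ℝ →L[ℝ] F} {t x : ℝ}
    (h : HasFDerivAt g g' (t, x)) :
    HasDerivAt (fun s => g (s, x)) (g' (1, 0)) t := by
  have hline : HasFDerivAt (fun s : ℝ => (s, x)) ((ContinuousLinearMap.id ℝ ℝ).prod 0) t :=
    (hasFDerivAt_id t).prodMk (hasFDerivAt_const x t)
  have := (h.comp t hline).hasDerivAt
  simpa [Function.comp_def] using this

theorem slice2_hasDerivAt {g : ℝ × ℝ → F} {g' : ℝ × ℝ →L[ℝ] F} {t x : ℝ}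
    (h : HasFDerivAt g g' (t, x)) :
    HasDerivAt (fun s => g (t, s)) (g' (0, 1)) x := by
  have hline : HasFDerivAt (fun s : ℝ => (t, s)) ((0 : ℝ →L[ℝ] ℝ).prod (ContinuousLinearMap.id ℝ ℝ)) x :=
    (hasFDerivAt_const t x).prodMk (hasFDerivAt_id x)
  have := (h.comp x hline).hasDerivAt
  simpa [Function.comp_def] using this

end PD

theorem pd1_hasDerivAt {f : ℝ × ℝ → ℝ} {t x : ℝ} (hf : DifferentiableAt ℝ f (t, x)) :
    HasDerivAt (fun s => f (s, x)) (pd1 f (t, x)) t := by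
  have h := slice1_hasDerivAt hf.hasFDerivAt
  simpa [pd1, h.deriv] using h

theorem pd2_hasDerivAt {f : ℝ × ℝ → ℝ} {t x : ℝ} (hf : DifferentiableAt ℝ f (t, x)) :
    HasDerivAt (fun s => f (t, s)) (pd2 f (t, x)) x := by
  have h := slice2_hasDerivAt hf.hasFDerivAt
  simpa [pd2, h.deriv] using h

theorem pd1_eq_fderiv {f : ℝ × ℝ → ℝ} {t x : ℝ} (hf : DifferentiableAt ℝ f (t, x)) :
    pd1 f (t, x) = fderiv ℝ f (t, x) (1, 0) :=
  ((slice1_hasDerivAt hf.hasFDerivAt).deriv).symm ▸ rfl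

theorem pd2_eq_fderiv {f : ℝ × ℝ → ℝ} {t x : ℝ} (hf : DifferentiableAt ℝ f (t, x)) :
    pd2 f (t, x) = fderiv ℝ f (t, x) (0, 1) :=
  ((slice2_hasDerivAt hf.hasFDerivAt).deriv).symm ▸ rfl

theorem contDiffAt_pd1 {f : ℝ × ℝ → ℝ} {p : ℝ × ℝ} {n : ℕ}
    (hf : ContDiffAt ℝ (n + 1 : ℕ) f p) : ContDiffAt ℝ (n : ℕ) (pd1 f) p := by
  have h1 : ContDiffAt ℝ (n : ℕ) (fderiv ℝ f) p := hf.fderiv_right (by exact_mod_cast le_rfl)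
  have h2 : ContDiffAt ℝ (n : ℕ) (fun q => fderiv ℝ f q ((1 : ℝ), (0 : ℝ))) p :=
    h1.clm_apply contDiffAt_const
  refine h2.congr_of_eventuallyEq ?_
  have hev : ∀ᶠ q in nhds p, ContDiffAt ℝ (n + 1 : ℕ) f q := hf.eventually (by simp)
  filter_upwards [hev] with q hq
  obtain ⟨a, b⟩ := q
  exact pd1_eq_fderiv (hq.differentiableAt (by simp))

theorem contDiffAt_pd2 {f : ℝ × ℝ → ℝ} {p : ℝ × ℝ} {n : ℕ}
    (hf : ContDiffAt ℝ (n + 1 : ℕ) f p) : ContDiffAt ℝ (n : ℕ) (pd2 f) p := by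
  have h1 : ContDiffAt ℝ (n : ℕ) (fderiv ℝ f) p := hf.fderiv_right (by exact_mod_cast le_rfl)
  have h2 : ContDiffAt ℝ (n : ℕ) (fun q => fderiv ℝ f q ((0 : ℝ), (1 : ℝ))) p :=
    h1.clm_apply contDiffAt_const
  refine h2.congr_of_eventuallyEq ?_
  have hev : ∀ᶠ q in nhds p, ContDiffAt ℝ (n + 1 : ℕ) f q := hf.eventually (by simp)
  filter_upwards [hev] with q hq
  obtain ⟨a, b⟩ := q
  exact pd2_eq_fderiv (hq.differentiableAt (by simp))
/-- pd1 only depends on local behaviour -/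
theorem pd1_congr_nhds {f g : ℝ × ℝ → ℝ} {p : ℝ × ℝ} (h : f =ᶠ[nhds p] g) :
    pd1 f p = pd1 g p := by
  have ht : Tendsto (fun s : ℝ => (s, p.2)) (nhds p.1) (nhds p) := by
    rw [← @Prod.mk.eta _ _ p]
    exact (continuous_id.prodMk continuous_const).tendsto p.1
  exact Filter.EventuallyEq.deriv_eq (h.comp_tendsto ht)

theorem pd2_congr_nhds {f g : ℝ × ℝ → ℝ} {p : ℝ × ℝ} (h : f =ᶠ[nhds p] g) :
    pd2 f p = pd2 g p := by
  have ht : Tendsto (fun s : ℝ => (p.1, s)) (nhds p.2) (nhds p) := by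
    rw [← @Prod.mk.eta _ _ p]
    exact (continuous_const.prodMk continuous_id).tendsto p.2
  exact Filter.EventuallyEq.deriv_eq (h.comp_tendsto ht)

theorem pd1_eventuallyEq {f g : ℝ × ℝ → ℝ} {p : ℝ × ℝ} (h : f =ᶠ[nhds p] g) :
    pd1 f =ᶠ[nhds p] pd1 g := by
  filter_upwards [h.eventuallyEq_nhds] with q hq using pd1_congr_nhds hq

theorem pd2_eventuallyEq {f g : ℝ × ℝ → ℝ} {p : ℝ × ℝ} (h : f =ᶠ[nhds p] g) :
    pd2 f =ᶠ[nhds p] pd2 g := by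
  filter_upwards [h.eventuallyEq_nhds] with q hq using pd2_congr_nhds hq

/-- Clairaut / Schwarz symmetry of second partials. -/
theorem pd_comm {f : ℝ × ℝ → ℝ} {t x : ℝ} (hf : ContDiffAt ℝ (2 : ℕ) f (t, x)) :
    pd1 (pd2 f) (t, x) = pd2 (pd1 f) (t, x) := by
  set p : ℝ × ℝ := (t, x) with hp
  have h1 : ContDiffAt ℝ (1 : ℕ) (fderiv ℝ f) p := hf.fderiv_right (by norm_num)
  have hd : DifferentiableAt ℝ (fderiv ℝ f) p := h1.differentiableAt (by norm_num)
  set f'' := fderiv ℝ (fderiv ℝ f) p with hf''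
  have hev : ∀ᶠ q in nhds p, HasFDerivAt f (fderiv ℝ f q) q := by
    filter_upwards [hf.eventually (by simp)] with q hq
    exact (hq.differentiableAt (by norm_num)).hasFDerivAt
  have hsymm : ∀ v w : ℝ × ℝ, f'' v w = f'' w v := fun v w =>
    second_derivative_symmetric_of_eventually_of_real hev hd.hasFDerivAt v w
  -- identify pd1 (pd2 f) p with f'' (1,0) (0,1)
  have hev2 : pd2 f =ᶠ[nhds p] fun q => fderiv ℝ f q ((0:ℝ), (1:ℝ)) := by
    filter_upwards [hf.eventually (by simp)] with q hq
    obtain ⟨a, b⟩ := q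
    exact pd2_eq_fderiv (hq.differentiableAt (by norm_num))
  have hev1 : pd1 f =ᶠ[nhds p] fun q => fderiv ℝ f q ((1:ℝ), (0:ℝ)) := by
    filter_upwards [hf.eventually (by simp)] with q hq
    obtain ⟨a, b⟩ := q
    exact pd1_eq_fderiv (hq.differentiableAt (by norm_num))
  have e1 : pd1 (pd2 f) p = f'' (1, 0) (0, 1) := by
    rw [pd1_congr_nhds hev2]
    have happ : HasFDerivAt (fun q => fderiv ℝ f q ((0:ℝ), (1:ℝ)))
        ((f'').flip ((0:ℝ), (1:ℝ))) p := by
      have := (ContinuousLinearMap.apply ℝ ℝ ((0:ℝ),(1:ℝ))).hasFDerivAt.comp p hd.hasFDerivAt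
      exact this
    have := (slice1_hasDerivAt happ).deriv
    simpa [pd1] using this
  have e2 : pd2 (pd1 f) p = f'' (0, 1) (1, 0) := by
    rw [pd2_congr_nhds hev1]
    have happ : HasFDerivAt (fun q => fderiv ℝ f q ((1:ℝ), (0:ℝ)))
        ((f'').flip ((1:ℝ), (0:ℝ))) p := by
      have := (ContinuousLinearMap.apply ℝ ℝ ((1:ℝ),(0:ℝ))).hasFDerivAt.comp p hd.hasFDerivAt
      exact this
    have := (slice2_hasDerivAt happ).deriv
    simpa [pd2] using this
  rw [e1, e2, hsymm]




section Ops

variable {Ψ : ℝ → ℝ} (hΨ : ContDiff ℝ (⊤ : ℕ∞) Ψ)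

include hΨ in

theorem derivPsi_contDiff : ContDiff ℝ (⊤ : ℕ∞) (deriv Ψ) := by
  rw [contDiff_infty_iff_deriv] at hΨ
  exact hΨ.2

include hΨ in
theorem coefA_contDiffAt {n : ℕ} {p : ℝ × ℝ} :
    ContDiffAt ℝ (n : ℕ) (fun q : ℝ × ℝ => ((deriv Ψ (q.1 - q.2))^2 + 1)/2) p :=
  (((((derivPsi_contDiff hΨ).comp (contDiff_fst.sub contDiff_snd)).pow 2).add
    contDiff_const).div_const 2).of_le (by exact_mod_cast le_top) |>.contDiffAt

include hΨ in
theorem coefB_contDiffAt {n : ℕ} {p : ℝ × ℝ} :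
    ContDiffAt ℝ (n : ℕ) (fun q : ℝ × ℝ => ((deriv Ψ (q.1 - q.2))^2 - 1)/2) p :=
  (((((derivPsi_contDiff hΨ).comp (contDiff_fst.sub contDiff_snd)).pow 2).sub
    contDiff_const).div_const 2).of_le (by exact_mod_cast le_top) |>.contDiffAt

theorem contDiffAt_Lop {f : ℝ × ℝ → ℝ} {p : ℝ × ℝ} {n : ℕ}
    (hf : ContDiffAt ℝ (n + 1 : ℕ) f p) : ContDiffAt ℝ (n : ℕ) (Lop f) p :=
  (contDiffAt_pd1 hf).add (contDiffAt_pd2 hf)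

include hΨ in
theorem contDiffAt_Lbar {f : ℝ × ℝ → ℝ} {p : ℝ × ℝ} {n : ℕ}
    (hf : ContDiffAt ℝ (n + 1 : ℕ) f p) : ContDiffAt ℝ (n : ℕ) (Lbar Ψ f) p :=
  ((coefA_contDiffAt hΨ).mul (contDiffAt_pd1 hf)).add
    ((coefB_contDiffAt hΨ).mul (contDiffAt_pd2 hf))

theorem contDiffAt_iterLop {j : ℕ} : ∀ {f : ℝ × ℝ → ℝ} {p : ℝ × ℝ} {n : ℕ},
    ContDiffAt ℝ (n + j : ℕ) f p → ContDiffAt ℝ (n : ℕ) (Lop^[j] f) p := by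
  induction j with
  | zero => intro f p n hf; simpa using hf
  | succ j ih =>
      intro f p n hf
      rw [Function.iterate_succ_apply]
      rw [show n + (j+1) = n + j + 1 from by omega] at hf
      exact ih (contDiffAt_Lop hf)

include hΨ in
theorem contDiffAt_iterLbar {i : ℕ} : ∀ {f : ℝ × ℝ → ℝ} {p : ℝ × ℝ} {n : ℕ},
    ContDiffAt ℝ (n + i : ℕ) f p → ContDiffAt ℝ (n : ℕ) ((Lbar Ψ)^[i] f) p := by
  induction i with
  | zero => intro f p n hf; simpa using hf
  | succ i ih =>
      intro f p n hf
      rw [Function.iterate_succ_apply]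
      rw [show n + (i+1) = n + i + 1 from by omega] at hf
      exact ih (contDiffAt_Lbar hΨ hf)

include hΨ in
theorem contDiffAt_word {f : ℝ × ℝ → ℝ} {p : ℝ × ℝ} {n i j : ℕ}
    (hf : ContDiffAt ℝ (n + i + j : ℕ) f p) :
    ContDiffAt ℝ (n : ℕ) ((Lbar Ψ)^[i] (Lop^[j] f)) p :=
  contDiffAt_iterLbar hΨ (contDiffAt_iterLop hf)

theorem Lop_congr_nhds {f g : ℝ × ℝ → ℝ} {p : ℝ × ℝ} (h : f =ᶠ[nhds p] g) :
    Lop f p = Lop g p := by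
  unfold Lop; rw [pd1_congr_nhds h, pd2_congr_nhds h]

theorem Lbar_congr_nhds {f g : ℝ × ℝ → ℝ} {p : ℝ × ℝ} (h : f =ᶠ[nhds p] g) :
    Lbar Ψ f p = Lbar Ψ g p := by
  unfold Lbar; rw [pd1_congr_nhds h, pd2_congr_nhds h]

theorem Lop_eventuallyEq {f g : ℝ × ℝ → ℝ} {p : ℝ × ℝ} (h : f =ᶠ[nhds p] g) :
    Lop f =ᶠ[nhds p] Lop g := by
  filter_upwards [h.eventuallyEq_nhds] with q hq using Lop_congr_nhds hq

theorem Lbar_eventuallyEq {f g : ℝ × ℝ → ℝ} {p : ℝ × ℝ} (h : f =ᶠ[nhds p] g) :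
    Lbar Ψ f =ᶠ[nhds p] Lbar Ψ g := by
  filter_upwards [h.eventuallyEq_nhds] with q hq using Lbar_congr_nhds hq

theorem iterLbar_eventuallyEq {i : ℕ} {f g : ℝ × ℝ → ℝ} {p : ℝ × ℝ} (h : f =ᶠ[nhds p] g) :
    (Lbar Ψ)^[i] f =ᶠ[nhds p] (Lbar Ψ)^[i] g := by
  induction i with
  | zero => simpa using h
  | succ i ih =>
      rw [Function.iterate_succ_apply', Function.iterate_succ_apply']
      exact Lbar_eventuallyEq ih

end Ops

section Comm

variable {Ψ : ℝ → ℝ} (hΨ : ContDiff ℝ (⊤ : ℕ∞) Ψ)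

include hΨ in
/-- single commutation `L (L̄ f) = L̄ (L f)` at a point of `C²`-smoothness -/
theorem Lop_Lbar_comm {f : ℝ × ℝ → ℝ} {t x : ℝ} (hf : ContDiffAt ℝ (2 : ℕ) f (t, x)) :
    Lop (Lbar Ψ f) (t, x) = Lbar Ψ (Lop f) (t, x) := by
  have hdΨ : Differentiable ℝ (deriv Ψ) :=
    (derivPsi_contDiff hΨ).differentiable (by simp)
  set c : ℝ → ℝ := fun s => (deriv Ψ s)^2 with hc
  have hcd : ∀ s : ℝ, DifferentiableAt ℝ c s := fun s => (hdΨ s).pow 2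
  set dcu : ℝ := deriv c (t - x) with hdcu
  have hcu : HasDerivAt c dcu (t - x) := (hcd (t - x)).hasDerivAt
  -- slices of c
  have hcsx : HasDerivAt (fun s => c (s - x)) dcu t := by
    have := hcu.comp t ((hasDerivAt_id t).sub_const x)
    simpa [Function.comp_def] using this
  have hcts : HasDerivAt (fun s => c (t - s)) (-dcu) x := by
    have := hcu.comp x ((hasDerivAt_id x).const_sub t)
    simpa [Function.comp_def] using this
  -- first partials are C¹, hence differentiable
  have h1 : ContDiffAt ℝ (1 : ℕ) (pd1 f) (t, x) := contDiffAt_pd1 hf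
  have h2 : ContDiffAt ℝ (1 : ℕ) (pd2 f) (t, x) := contDiffAt_pd2 hf
  have h1d : DifferentiableAt ℝ (pd1 f) (t, x) := h1.differentiableAt (by norm_num)
  have h2d : DifferentiableAt ℝ (pd2 f) (t, x) := h2.differentiableAt (by norm_num)
  set p11 := pd1 (pd1 f) (t, x)
  set p12 := pd1 (pd2 f) (t, x)
  set p21 := pd2 (pd1 f) (t, x)
  set p22 := pd2 (pd2 f) (t, x)
  have hcomm : p12 = p21 := pd_comm hf
  have h11 : HasDerivAt (fun s => pd1 f (s, x)) p11 t := pd1_hasDerivAt h1d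
  have h12 : HasDerivAt (fun s => pd2 f (s, x)) p12 t := pd1_hasDerivAt h2d
  have h21 : HasDerivAt (fun s => pd1 f (t, s)) p21 x := pd2_hasDerivAt h1d
  have h22 : HasDerivAt (fun s => pd2 f (t, s)) p22 x := pd2_hasDerivAt h2d
  -- derivative of the coefficients along slices
  have hA1 : HasDerivAt (fun s => (c (s - x) + 1)/2) (dcu/2) t := (hcsx.add_const 1).div_const 2
  have hB1 : HasDerivAt (fun s => (c (s - x) - 1)/2) (dcu/2) t := (hcsx.sub_const 1).div_const 2
  have hA2 : HasDerivAt (fun s => (c (t - s) + 1)/2) (-dcu/2) x := (hcts.add_const 1).div_const 2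
  have hB2 : HasDerivAt (fun s => (c (t - s) - 1)/2) (-dcu/2) x := (hcts.sub_const 1).div_const 2
  -- compute pd1 (Lbar Ψ f)
  have E1 : pd1 (Lbar Ψ f) (t, x)
      = (dcu/2 * pd1 f (t, x) + (c (t - x) + 1)/2 * p11)
        + (dcu/2 * pd2 f (t, x) + (c (t - x) - 1)/2 * p12) := by
    have h := (hA1.mul h11).add (hB1.mul h12)
    have h' : HasDerivAt (fun s => Lbar Ψ f (s, x)) _ t := h
    simpa [pd1] using h'.deriv
  have E2 : pd2 (Lbar Ψ f) (t, x)
      = (-dcu/2 * pd1 f (t, x) + (c (t - x) + 1)/2 * p21)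
        + (-dcu/2 * pd2 f (t, x) + (c (t - x) - 1)/2 * p22) := by
    have h := (hA2.mul h21).add (hB2.mul h22)
    have h' : HasDerivAt (fun s => Lbar Ψ f (t, s)) _ x := h
    simpa [pd2] using h'.deriv
  have E3 : pd1 (Lop f) (t, x) = p11 + p12 := by
    have h' : HasDerivAt (fun s => Lop f (s, x)) _ t := h11.add h12
    simpa [pd1] using h'.deriv
  have E4 : pd2 (Lop f) (t, x) = p21 + p22 := by
    have h' : HasDerivAt (fun s => Lop f (t, s)) _ x := h21.add h22
    simpa [pd2] using h'.deriv
  show pd1 (Lbar Ψ f) (t, x) + pd2 (Lbar Ψ f) (t, x) = _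
  rw [E1, E2]
  show _ = (c (t-x) + 1)/2 * pd1 (Lop f) (t,x) + (c (t-x) - 1)/2 * pd2 (Lop f) (t,x)
  rw [E3, E4, hcomm]
  ring

end Comm

section CommIter

variable {Ψ : ℝ → ℝ} (hΨ : ContDiff ℝ (⊤ : ℕ∞) Ψ)

include hΨ in
theorem Lop_iterLbar_comm {i : ℕ} : ∀ {f : ℝ × ℝ → ℝ} {t x : ℝ},
    ContDiffAt ℝ (i + 2 : ℕ) f (t, x) →
    Lop ((Lbar Ψ)^[i] f) (t, x) = (Lbar Ψ)^[i] (Lop f) (t, x) := by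
  induction i with
  | zero => intro f t x _; rfl
  | succ i ih =>
      intro f t x hf
      have hf' : ContDiffAt ℝ (i + 2 : ℕ) (Lbar Ψ f) (t, x) := by
        refine contDiffAt_Lbar hΨ ?_
        rwa [show (i + 2) + 1 = i + 1 + 2 from by omega]
      have step1 : Lop ((Lbar Ψ)^[i+1] f) (t, x) = (Lbar Ψ)^[i] (Lop (Lbar Ψ f)) (t, x) := by
        rw [Function.iterate_succ_apply]
        exact ih hf'
      have hev : Lop (Lbar Ψ f) =ᶠ[nhds ((t : ℝ), x)] Lbar Ψ (Lop f) := by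
        filter_upwards [hf.eventually (natCast_ne_infty _)] with q hq
        obtain ⟨a, b⟩ := q
        exact Lop_Lbar_comm hΨ (hq.of_le (by exact_mod_cast by omega))
      rw [step1, (iterLbar_eventuallyEq hev).eq_of_nhds,
        Function.iterate_succ_apply (Lbar Ψ) i (Lop f)]

theorem contDiffAt_of_top {f : ℝ × ℝ → ℝ} {p : ℝ × ℝ} (h : ContDiffAt ℝ (⊤ : ℕ∞) f p)
    (N : ℕ) : ContDiffAt ℝ (N : ℕ) f p := h.of_le (by exact_mod_cast le_top)

include hΨ in
/-- the key commutation: `L (L̄^i L^j φ) = L̄^i (L^{j+1} φ)` near a point where `φ` is smooth -/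
theorem key_comm {i j : ℕ} {φ : ℝ × ℝ → ℝ} {t x : ℝ}
    (hφ : ContDiffAt ℝ (⊤ : ℕ∞) φ (t, x)) :
    Lop ((Lbar Ψ)^[i] (Lop^[j] φ)) =ᶠ[nhds ((t : ℝ), x)]
      (Lbar Ψ)^[i] (Lop^[j+1] φ) := by
  filter_upwards [(contDiffAt_of_top hφ (i + 2 + j)).eventually (natCast_ne_infty _)] with q hq
  obtain ⟨a, b⟩ := q
  have hg : ContDiffAt ℝ (i + 2 : ℕ) (Lop^[j] φ) (a, b) := contDiffAt_iterLop hq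
  rw [Lop_iterLbar_comm hΨ hg, Function.iterate_succ_apply' Lop j φ]

end CommIter





theorem lam_eq (γ s : ℝ) : Lam γ s = (1 + s^2) ^ ((1:ℝ) + γ) := by
  rw [Lam, japb, Real.sqrt_eq_rpow, ← Real.rpow_mul (by positivity),
    show (1/2 : ℝ) * (2 + 2*γ) = 1 + γ from by ring]

theorem lam_pos (γ s : ℝ) : 0 < Lam γ s := by
  rw [lam_eq]; positivity

def dLam (γ s : ℝ) : ℝ := ((2:ℝ) + 2*γ) * s * (1 + s^2) ^ (γ:ℝ)

theorem lam_hasDerivAt (γ s : ℝ) : HasDerivAt (fun u => Lam γ u) (dLam γ s) s := by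
  have hfun : (fun u => Lam γ u) = fun u : ℝ => (1 + u^2) ^ ((1:ℝ) + γ) := by
    funext u; exact lam_eq γ u
  rw [hfun]
  have h1 : HasDerivAt (fun u : ℝ => 1 + u^2) (2*s) s := by
    simpa using ((hasDerivAt_pow 2 s).const_add 1)
  have h2 : HasDerivAt (fun y : ℝ => y ^ ((1:ℝ) + γ))
      (((1:ℝ) + γ) * (1 + s^2) ^ ((1:ℝ) + γ - 1)) (1 + s^2) :=
    Real.hasDerivAt_rpow_const (Or.inl (by positivity))
  have := h2.comp s h1
  refine this.congr_deriv ?_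
  rw [show (1:ℝ) + γ - 1 = γ from by ring, dLam]
  ring

theorem abs_dLam_le {γ : ℝ} (hγ0 : 0 < γ) (hγ1 : γ < 1) (s : ℝ) :
    |dLam γ s| ≤ 4 * Lam γ s := by
  have hbase : (1:ℝ) ≤ 1 + s^2 := by nlinarith [sq_nonneg s]
  have h0 : (0:ℝ) < 1 + s^2 := by positivity
  have habs : |dLam γ s| = ((2:ℝ) + 2*γ) * (|s| * (1 + s^2) ^ (γ:ℝ)) := by
    rw [dLam, abs_mul, abs_mul, abs_of_nonneg (by linarith : (0:ℝ) ≤ 2 + 2*γ),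
      abs_of_nonneg (Real.rpow_nonneg (le_of_lt h0) _), mul_assoc]
  rw [habs, lam_eq]
  have hs : |s| ≤ (1 + s^2) ^ ((1:ℝ)/2) := by
    rw [← Real.sqrt_eq_rpow]
    calc |s| = Real.sqrt (s^2) := (Real.sqrt_sq_eq_abs s).symm
    _ ≤ Real.sqrt (1 + s^2) := Real.sqrt_le_sqrt (by linarith)
  have hstep : |s| * (1 + s^2) ^ (γ:ℝ) ≤ (1 + s^2) ^ ((1:ℝ) + γ) := by
    calc |s| * (1 + s^2) ^ (γ:ℝ)
        ≤ (1 + s^2) ^ ((1:ℝ)/2) * (1 + s^2) ^ (γ:ℝ) := by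
          exact mul_le_mul_of_nonneg_right hs (Real.rpow_nonneg (le_of_lt h0) _)
      _ = (1 + s^2) ^ ((1:ℝ)/2 + γ) := (Real.rpow_add h0 _ _).symm
      _ ≤ (1 + s^2) ^ ((1:ℝ) + γ) :=
          Real.rpow_le_rpow_of_exponent_le hbase (by linarith)
  calc ((2:ℝ) + 2*γ) * (|s| * (1 + s^2) ^ (γ:ℝ))
      ≤ 4 * (|s| * (1 + s^2) ^ (γ:ℝ)) := by
        apply mul_le_mul_of_nonneg_right (by linarith)
        positivity
    _ ≤ 4 * ((1 + s^2) ^ ((1:ℝ) + γ)) := by linarith [hstep]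

theorem ubar_hasDerivAt {Ψ : ℝ → ℝ} (hΨ : ContDiff ℝ (⊤ : ℕ∞) Ψ) (t x : ℝ) :
    HasDerivAt (fun y => ubar Ψ t y) (((deriv Ψ (t - x))^2 + 1)/2) x := by
  have hcont : Continuous (fun τ => (deriv Ψ τ)^2) :=
    ((derivPsi_contDiff hΨ).continuous).pow 2
  have hH : ∀ u : ℝ, HasDerivAt (fun v => ∫ τ in (0:ℝ)..v, (deriv Ψ τ)^2)
      ((deriv Ψ u)^2) u := by
    intro u
    exact (intervalIntegral.integral_hasStrictDerivAt_right
      (hcont.intervalIntegrable 0 u) (hcont.stronglyMeasurableAtFilter _ _)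
      hcont.continuousAt).hasDerivAt
  have h2 : HasDerivAt (fun y : ℝ => ∫ τ in (0:ℝ)..(t - y), (deriv Ψ τ)^2)
      (-(deriv Ψ (t - x))^2) x := by
    have := (hH (t - x)).comp x ((hasDerivAt_id x).const_sub t)
    simpa [Function.comp_def] using this
  have h1 : HasDerivAt (fun y : ℝ => (t + y)/2) (1/2) x := by
    simpa using (((hasDerivAt_id x).const_add t).div_const 2)
  have := h1.sub (h2.const_mul (1/2 : ℝ))
  refine this.congr_deriv ?_
  ring

/-! ### analysis helpers -/

theorem pd2_eq_comb (Ψ : ℝ → ℝ) (g : ℝ × ℝ → ℝ) (p : ℝ × ℝ) :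
    pd2 g p = ((deriv Ψ (p.1 - p.2))^2 + 1)/2 * Lop g p - Lbar Ψ g p := by
  unfold Lop Lbar; ring

theorem int_bound {v : ℝ → ℝ} (hc : Continuous v) (hnn : ∀ x, 0 ≤ v x) {K : ℝ} (hK : 0 ≤ K)
    (h : ∫⁻ x : ℝ, ENNReal.ofReal (v x) ≤ ENNReal.ofReal K) :
    Integrable v ∧ ∫ x : ℝ, v x ≤ K := by
  have hm : AEStronglyMeasurable v (volume : Measure ℝ) := hc.aestronglyMeasurable
  have hae : 0 ≤ᵐ[(volume : Measure ℝ)] v := Filter.Eventually.of_forall hnn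
  have hfin : HasFiniteIntegral v (volume : Measure ℝ) := by
    rw [hasFiniteIntegral_iff_ofReal hae]
    exact lt_of_le_of_lt h ENNReal.ofReal_lt_top
  refine ⟨⟨hm, hfin⟩, ?_⟩
  rw [integral_eq_lintegral_of_nonneg_ae hae hm]
  exact ENNReal.toReal_le_of_le_ofReal hK h

theorem ftc_bound_Ioi {f f' D : ℝ → ℝ} (hD : Integrable D)
    (hf : ∀ x, HasDerivAt f (f' x) x) (hc : Continuous f')
    (hbd : ∀ x, |f' x| ≤ D x) (htend : Tendsto f atTop (nhds 0)) (x₀ : ℝ) :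
    f x₀ ≤ ∫ x : ℝ, D x := by
  have hint : Integrable f' := by
    refine hD.mono' hc.aestronglyMeasurable ?_
    exact Filter.Eventually.of_forall fun x => by simpa [Real.norm_eq_abs] using hbd x
  have key : ∫ x in Ioi x₀, f' x = 0 - f x₀ :=
    integral_Ioi_of_hasDerivAt_of_tendsto' (fun x _ => hf x) hint.integrableOn htend
  have h1 : f x₀ = ∫ x in Ioi x₀, -f' x := by
    rw [integral_neg, key]; ring
  rw [h1]
  calc ∫ x in Ioi x₀, -f' x
      ≤ ∫ x in Ioi x₀, D x := by
        refine setIntegral_mono_on hint.neg.integrableOn hD.integrableOn measurableSet_Ioi ?_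
        intro x _
        exact (neg_le_abs _).trans (hbd x)
    _ ≤ ∫ x : ℝ, D x := setIntegral_le_integral hD
        (Filter.Eventually.of_forall fun x => (abs_nonneg _).trans (hbd x))

theorem ftc_bound_Iic {f f' D : ℝ → ℝ} (hD : Integrable D)
    (hf : ∀ x, HasDerivAt f (f' x) x) (hc : Continuous f')
    (hbd : ∀ x, |f' x| ≤ D x) (htend : Tendsto f atBot (nhds 0)) (x₀ : ℝ) :
    f x₀ ≤ ∫ x : ℝ, D x := by
  have hint : Integrable f' := by
    refine hD.mono' hc.aestronglyMeasurable ?_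
    exact Filter.Eventually.of_forall fun x => by simpa [Real.norm_eq_abs] using hbd x
  have key : ∫ x in Iic x₀, f' x = f x₀ - 0 :=
    integral_Iic_of_hasDerivAt_of_tendsto' (fun x _ => hf x) hint.integrableOn htend
  have h1 : f x₀ = ∫ x in Iic x₀, f' x := by rw [key]; ring
  rw [h1]
  calc ∫ x in Iic x₀, f' x
      ≤ ∫ x in Iic x₀, D x := by
        refine setIntegral_mono_on hint.integrableOn hD.integrableOn measurableSet_Iic ?_
        intro x _
        exact (le_abs_self _).trans (hbd x)
    _ ≤ ∫ x : ℝ, D x := setIntegral_le_integral hD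
        (Filter.Eventually.of_forall fun x => (abs_nonneg _).trans (hbd x))


theorem lam_continuous (γ : ℝ) : Continuous (fun s => Lam γ s) := by
  have h : Differentiable ℝ (fun u => Lam γ u) := fun s => (lam_hasDerivAt γ s).differentiableAt
  exact h.continuous

theorem dlam_continuous (γ : ℝ) : Continuous (dLam γ) := by
  unfold dLam
  exact (continuous_const.mul continuous_id).mul
    ((continuous_const.add (continuous_pow 2)).rpow_const fun x => Or.inl (by simp only [Pi.add_apply]; positivity))

theorem ubar_continuous {Ψ : ℝ → ℝ} (hΨ : ContDiff ℝ (⊤ : ℕ∞) Ψ) (t : ℝ) :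
    Continuous (fun x => ubar Ψ t x) := by
  have h : Differentiable ℝ (fun y => ubar Ψ t y) := fun x => (ubar_hasDerivAt hΨ t x).differentiableAt
  exact h.continuous

theorem slice_cont {g : ℝ × ℝ → ℝ} {t : ℝ} (h : ∀ x : ℝ, ContinuousAt g (t, x)) :
    Continuous (fun x => g (t, x)) := by
  rw [continuous_iff_continuousAt]
  intro x
  exact (h x).comp ((Continuous.prodMk_right t).continuousAt)



/-- **Pointwise `L^∞` bounds from weighted energy bounds (Lemma 3.1).**
Fix `γ ∈ (0,1)` and `B ≥ 0`.  There is `C = C(γ,B)` such that for every smooth `Ψ` with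
`sup|Ψ'| ≤ B`, all `δ, M > 0`, every `k`, every time `t`, and every `φ` smooth near
`{t} × ℝ` whose weighted energies of order `≤ k+1` are bounded by `δ²M²` (resp. `M²`) and
whose weighted derivatives decay at spatial infinity, one has for all `i + j ≤ k`:
`|L L̄^i L^j φ(t,x)| ≤ C·δ·M·Λ̄(ū(t,x))^{−1/2}` and
`|L̄ L̄^i L^j φ(t,x)| ≤ C·M·Λ(t−x)^{−1/2}`. -/
theorem pointwise_bounds_from_energies
    (γ : ℝ) (hγ0 : 0 < γ) (hγ1 : γ < 1) (B : ℝ) (hB : 0 ≤ B) :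
    ∃ C : ℝ, 0 < C ∧
      ∀ (Ψ : ℝ → ℝ), ContDiff ℝ (⊤ : ℕ∞) Ψ → (∀ s : ℝ, |deriv Ψ s| ≤ B) →
      ∀ (δ M : ℝ), 0 < δ → 0 < M →
      ∀ (k : ℕ) (t : ℝ) (φ : ℝ × ℝ → ℝ),
        (∀ x : ℝ, ContDiffAt ℝ (⊤ : ℕ∞) φ (t, x)) →
        (∀ i j : ℕ, i + j ≤ k + 1 →
          (∫⁻ x : ℝ, ENNReal.ofReal
              (Lam γ (ubar Ψ t x) * (Lop ((Lbar Ψ)^[i] (Lop^[j] φ)) (t, x))^2)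
            ≤ ENNReal.ofReal (δ^2 * M^2)) ∧
          (∫⁻ x : ℝ, ENNReal.ofReal
              (Lam γ (t - x) * (Lbar Ψ ((Lbar Ψ)^[i] (Lop^[j] φ)) (t, x))^2)
            ≤ ENNReal.ofReal (M^2))) →
        (∀ i j : ℕ, i + j ≤ k →
          Tendsto (fun x => Real.sqrt (Lam γ (ubar Ψ t x))
              * |Lop ((Lbar Ψ)^[i] (Lop^[j] φ)) (t, x)|) atTop (nhds 0) ∧
          Tendsto (fun x => Real.sqrt (Lam γ (t - x))
              * |Lbar Ψ ((Lbar Ψ)^[i] (Lop^[j] φ)) (t, x)|) atBot (nhds 0)) →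
        ∀ i j : ℕ, i + j ≤ k → ∀ x : ℝ,
          |Lop ((Lbar Ψ)^[i] (Lop^[j] φ)) (t, x)|
              ≤ C * δ * M * (Real.sqrt (Lam γ (ubar Ψ t x)))⁻¹ ∧
          |Lbar Ψ ((Lbar Ψ)^[i] (Lop^[j] φ)) (t, x)|
              ≤ C * M * (Real.sqrt (Lam γ (t - x)))⁻¹ := by
  refine ⟨3*B+3, by linarith, ?_⟩
  intro Ψ hΨ hBd δ M hδ hM k t φ hφ hEn hDec i j hij x₀
  have hij1 : i + j ≤ k + 1 := le_trans hij (Nat.le_succ k)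
  have hij2 : i + (j+1) ≤ k + 1 := by omega
  have hij3 : (i+1) + j ≤ k + 1 := by omega
  -- bounds on the coefficient
  have ha_le : ∀ s : ℝ, ((deriv Ψ s)^2 + 1)/2 ≤ (B^2+1)/2 := by
    intro s
    have h := abs_le.mp (hBd s)
    have : (deriv Ψ s)^2 ≤ B^2 := sq_le_sq' h.1 h.2
    linarith
  have ha_nonneg : ∀ s : ℝ, 0 ≤ ((deriv Ψ s)^2 + 1)/2 := fun s => by positivity
  have hamax : (0:ℝ) ≤ (B^2+1)/2 := by positivity
  -- smoothness of all words on the slice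
  have hword : ∀ (i' j' n : ℕ) (x : ℝ),
      ContDiffAt ℝ (n : ℕ) ((Lbar Ψ)^[i'] (Lop^[j'] φ)) (t, x) :=
    fun i' j' n x => contDiffAt_word hΨ (contDiffAt_of_top (hφ x) (n + i' + j'))
  have hcW : ∀ (i' j' : ℕ), Continuous (fun x => Lop ((Lbar Ψ)^[i'] (Lop^[j'] φ)) (t, x)) :=
    fun i' j' => slice_cont fun x => (contDiffAt_Lop (n := 0) (hword i' j' 1 x)).continuousAt
  have hcV : ∀ (i' j' : ℕ), Continuous (fun x => Lbar Ψ ((Lbar Ψ)^[i'] (Lop^[j'] φ)) (t, x)) :=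
    fun i' j' => slice_cont fun x => (contDiffAt_Lbar hΨ (n := 0) (hword i' j' 1 x)).continuousAt
  have hcΛ1 : Continuous (fun x => Lam γ (ubar Ψ t x)) :=
    (lam_continuous γ).comp (ubar_continuous hΨ t)
  have hcdΛ1 : Continuous (fun x => dLam γ (ubar Ψ t x)) :=
    (dlam_continuous γ).comp (ubar_continuous hΨ t)
  have hcΛ2 : Continuous (fun x => Lam γ (t - x)) :=
    (lam_continuous γ).comp (continuous_const.sub continuous_id)
  have hcdΛ2 : Continuous (fun x => dLam γ (t - x)) :=
    (dlam_continuous γ).comp (continuous_const.sub continuous_id)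
  have hca : Continuous (fun x => ((deriv Ψ (t - x))^2 + 1)/2) :=
    ((((derivPsi_contDiff hΨ).continuous.comp
      (continuous_const.sub continuous_id)).pow 2).add continuous_const).div_const 2
  constructor
  · -- ### first bound : |L w| ≤ C δ M Λ̄(ū)^{-1/2}
    -- energies
    have hT0 := int_bound (v := fun x => Lam γ (ubar Ψ t x)
        * (Lop ((Lbar Ψ)^[i] (Lop^[j] φ)) (t, x))^2)
      (hcΛ1.mul ((hcW i j).pow 2))
      (fun x => mul_nonneg (le_of_lt (lam_pos γ _)) (sq_nonneg _))
      (by positivity) (hEn i j hij1).1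
    have hT1 := int_bound (v := fun x => Lam γ (ubar Ψ t x)
        * (Lop ((Lbar Ψ)^[i] (Lop^[j+1] φ)) (t, x))^2)
      (hcΛ1.mul ((hcW i (j+1)).pow 2))
      (fun x => mul_nonneg (le_of_lt (lam_pos γ _)) (sq_nonneg _))
      (by positivity) (hEn i (j+1) hij2).1
    have hT2 := int_bound (v := fun x => Lam γ (ubar Ψ t x)
        * (Lop ((Lbar Ψ)^[i+1] (Lop^[j] φ)) (t, x))^2)
      (hcΛ1.mul ((hcW (i+1) j).pow 2))
      (fun x => mul_nonneg (le_of_lt (lam_pos γ _)) (sq_nonneg _))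
      (by positivity) (hEn (i+1) j hij3).1
    -- commutation identities
    have hid1 : ∀ x : ℝ, Lop (Lop ((Lbar Ψ)^[i] (Lop^[j] φ))) (t, x)
        = Lop ((Lbar Ψ)^[i] (Lop^[j+1] φ)) (t, x) :=
      fun x => Lop_congr_nhds (key_comm hΨ (hφ x))
    have hid2 : ∀ x : ℝ, Lbar Ψ (Lop ((Lbar Ψ)^[i] (Lop^[j] φ))) (t, x)
        = Lop ((Lbar Ψ)^[i+1] (Lop^[j] φ)) (t, x) := by
      intro x
      rw [← Lop_Lbar_comm hΨ (hword i j 2 x),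
        Function.iterate_succ_apply' (Lbar Ψ) i (Lop^[j] φ)]
    -- the derivative of the energy density along the slice
    have hderiv : ∀ x : ℝ, HasDerivAt
        (fun y => Lam γ (ubar Ψ t y) * (Lop ((Lbar Ψ)^[i] (Lop^[j] φ)) (t, y))^2)
        (dLam γ (ubar Ψ t x) * (((deriv Ψ (t - x))^2 + 1)/2)
            * (Lop ((Lbar Ψ)^[i] (Lop^[j] φ)) (t, x))^2
          + Lam γ (ubar Ψ t x) * (2 * Lop ((Lbar Ψ)^[i] (Lop^[j] φ)) (t, x)
            * (((deriv Ψ (t - x))^2 + 1)/2 * Lop ((Lbar Ψ)^[i] (Lop^[j+1] φ)) (t, x)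
              - Lop ((Lbar Ψ)^[i+1] (Lop^[j] φ)) (t, x)))) x := by
      intro x
      have hΛd : HasDerivAt (fun y => Lam γ (ubar Ψ t y))
          (dLam γ (ubar Ψ t x) * (((deriv Ψ (t - x))^2 + 1)/2)) x :=
        (lam_hasDerivAt γ (ubar Ψ t x)).comp x (ubar_hasDerivAt hΨ t x)
      have hdiff : DifferentiableAt ℝ (Lop ((Lbar Ψ)^[i] (Lop^[j] φ))) (t, x) :=
        (contDiffAt_Lop (n := 1) (hword i j 2 x)).differentiableAt (by norm_num)
      have hWd : HasDerivAt (fun y => Lop ((Lbar Ψ)^[i] (Lop^[j] φ)) (t, y))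
          (pd2 (Lop ((Lbar Ψ)^[i] (Lop^[j] φ))) (t, x)) x := pd2_hasDerivAt hdiff
      have hpd2 : pd2 (Lop ((Lbar Ψ)^[i] (Lop^[j] φ))) (t, x)
          = ((deriv Ψ (t - x))^2 + 1)/2 * Lop ((Lbar Ψ)^[i] (Lop^[j+1] φ)) (t, x)
            - Lop ((Lbar Ψ)^[i+1] (Lop^[j] φ)) (t, x) := by
        rw [pd2_eq_comb Ψ, hid1 x, hid2 x]
      rw [hpd2] at hWd
      have := hΛd.mul (hWd.pow 2)
      refine this.congr_deriv ?_
      push_cast [Pi.pow_apply]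
      ring
    -- pointwise bound on the derivative
    have hbd : ∀ x : ℝ,
        |dLam γ (ubar Ψ t x) * (((deriv Ψ (t - x))^2 + 1)/2)
            * (Lop ((Lbar Ψ)^[i] (Lop^[j] φ)) (t, x))^2
          + Lam γ (ubar Ψ t x) * (2 * Lop ((Lbar Ψ)^[i] (Lop^[j] φ)) (t, x)
            * (((deriv Ψ (t - x))^2 + 1)/2 * Lop ((Lbar Ψ)^[i] (Lop^[j+1] φ)) (t, x)
              - Lop ((Lbar Ψ)^[i+1] (Lop^[j] φ)) (t, x)))|
        ≤ (5*((B^2+1)/2)+1) * (Lam γ (ubar Ψ t x)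
              * (Lop ((Lbar Ψ)^[i] (Lop^[j] φ)) (t, x))^2)
          + ((B^2+1)/2) * (Lam γ (ubar Ψ t x)
              * (Lop ((Lbar Ψ)^[i] (Lop^[j+1] φ)) (t, x))^2)
          + (Lam γ (ubar Ψ t x) * (Lop ((Lbar Ψ)^[i+1] (Lop^[j] φ)) (t, x))^2) := by
      intro x
      set Z := Lam γ (ubar Ψ t x) with hZ
      set a := ((deriv Ψ (t - x))^2 + 1)/2 with ha
      set W := Lop ((Lbar Ψ)^[i] (Lop^[j] φ)) (t, x) with hW
      set P := Lop ((Lbar Ψ)^[i] (Lop^[j+1] φ)) (t, x) with hP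
      set Q := Lop ((Lbar Ψ)^[i+1] (Lop^[j] φ)) (t, x) with hQ
      have hZpos : 0 < Z := lam_pos γ _
      have hdl : |dLam γ (ubar Ψ t x)| ≤ 4 * Z := abs_dLam_le hγ0 hγ1 _
      have ha1 : 0 ≤ a := ha_nonneg _
      have ha2 : a ≤ (B^2+1)/2 := ha_le _
      have e1 : |dLam γ (ubar Ψ t x) * a * W^2| ≤ 4 * ((B^2+1)/2) * (Z * W^2) := by
        rw [abs_mul, abs_mul, abs_of_nonneg ha1, abs_of_nonneg (sq_nonneg W)]
        have h1 : |dLam γ (ubar Ψ t x)| * a ≤ (4*Z) * ((B^2+1)/2) :=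
          mul_le_mul hdl ha2 ha1 (by positivity)
        linarith [mul_le_mul_of_nonneg_right h1 (sq_nonneg W)]
      have e2 : |Z * (2 * W * (a * P - Q))| ≤
          Z * (((B^2+1)/2) * (W^2 + P^2) + (W^2 + Q^2)) := by
        rw [abs_mul, abs_of_nonneg (le_of_lt hZpos)]
        apply mul_le_mul_of_nonneg_left _ (le_of_lt hZpos)
        have h2 : |2 * W * (a * P - Q)| ≤ 2 * abs W * (a * abs P + abs Q) := by
          rw [abs_mul, abs_mul, abs_two]
          apply mul_le_mul_of_nonneg_left _ (by positivity : (0:ℝ) ≤ 2 * abs W)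
          calc |a * P - Q| ≤ |a * P| + |Q| := abs_sub _ _
            _ = a * abs P + abs Q := by rw [abs_mul, abs_of_nonneg ha1]
        refine h2.trans ?_
        have k1 : 2 * abs W * abs P ≤ W^2 + P^2 := by
          have h := two_mul_le_add_sq (abs W) (abs P); rwa [sq_abs, sq_abs] at h
        have k2 : 2 * abs W * abs Q ≤ W^2 + Q^2 := by
          have h := two_mul_le_add_sq (abs W) (abs Q); rwa [sq_abs, sq_abs] at h
        have hWP : (0:ℝ) ≤ W^2 + P^2 := by positivity
        calc 2 * abs W * (a * abs P + abs Q)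
            = a * (2 * abs W * abs P) + 2 * abs W * abs Q := by ring
          _ ≤ a * (W^2 + P^2) + (W^2 + Q^2) :=
              add_le_add (mul_le_mul_of_nonneg_left k1 ha1) k2
          _ ≤ (B^2+1)/2 * (W^2 + P^2) + (W^2 + Q^2) :=
              add_le_add_left (mul_le_mul_of_nonneg_right ha2 hWP) _
      calc |dLam γ (ubar Ψ t x) * a * W^2 + Z * (2 * W * (a * P - Q))|
          ≤ |dLam γ (ubar Ψ t x) * a * W^2| + |Z * (2 * W * (a * P - Q))| := abs_add_le _ _
        _ ≤ 4 * ((B^2+1)/2) * (Z * W^2)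
            + Z * (((B^2+1)/2) * (W^2 + P^2) + (W^2 + Q^2)) := add_le_add e1 e2
        _ = (5*((B^2+1)/2)+1) * (Z * W^2) + ((B^2+1)/2) * (Z * P^2) + (Z * Q^2) := by ring
    -- integrable dominating function
    have hDint : Integrable (fun x =>
        (5*((B^2+1)/2)+1) * (Lam γ (ubar Ψ t x)
            * (Lop ((Lbar Ψ)^[i] (Lop^[j] φ)) (t, x))^2)
        + ((B^2+1)/2) * (Lam γ (ubar Ψ t x)
            * (Lop ((Lbar Ψ)^[i] (Lop^[j+1] φ)) (t, x))^2)
        + (Lam γ (ubar Ψ t x) * (Lop ((Lbar Ψ)^[i+1] (Lop^[j] φ)) (t, x))^2)) :=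
      ((hT0.1.const_mul _).add (hT1.1.const_mul _)).add hT2.1
    -- limit at +∞
    have htend : Tendsto (fun x => Lam γ (ubar Ψ t x)
        * (Lop ((Lbar Ψ)^[i] (Lop^[j] φ)) (t, x))^2) atTop (nhds 0) := by
      have hd := (hDec i j hij).1
      have heq : (fun x => Lam γ (ubar Ψ t x)
          * (Lop ((Lbar Ψ)^[i] (Lop^[j] φ)) (t, x))^2)
          = fun x => (Real.sqrt (Lam γ (ubar Ψ t x))
            * |Lop ((Lbar Ψ)^[i] (Lop^[j] φ)) (t, x)|)^2 := by
        funext x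
        rw [mul_pow, Real.sq_sqrt (le_of_lt (lam_pos γ _)), sq_abs]
      rw [heq]
      simpa using hd.pow 2
    -- continuity of the derivative
    have hcder : Continuous (fun x =>
        dLam γ (ubar Ψ t x) * (((deriv Ψ (t - x))^2 + 1)/2)
            * (Lop ((Lbar Ψ)^[i] (Lop^[j] φ)) (t, x))^2
          + Lam γ (ubar Ψ t x) * (2 * Lop ((Lbar Ψ)^[i] (Lop^[j] φ)) (t, x)
            * (((deriv Ψ (t - x))^2 + 1)/2 * Lop ((Lbar Ψ)^[i] (Lop^[j+1] φ)) (t, x)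
              - Lop ((Lbar Ψ)^[i+1] (Lop^[j] φ)) (t, x)))) := by
      exact ((hcdΛ1.mul hca).mul ((hcW i j).pow 2)).add
        (hcΛ1.mul ((continuous_const.mul (hcW i j)).mul
          ((hca.mul (hcW i (j+1))).sub (hcW (i+1) j))))
    -- FTC bound
    have hkey := ftc_bound_Ioi hDint hderiv hcder hbd htend x₀
    -- bound on the integral of the dominating function
    have hDbound : ∫ x : ℝ, ((5*((B^2+1)/2)+1) * (Lam γ (ubar Ψ t x)
            * (Lop ((Lbar Ψ)^[i] (Lop^[j] φ)) (t, x))^2)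
        + ((B^2+1)/2) * (Lam γ (ubar Ψ t x)
            * (Lop ((Lbar Ψ)^[i] (Lop^[j+1] φ)) (t, x))^2)
        + (Lam γ (ubar Ψ t x) * (Lop ((Lbar Ψ)^[i+1] (Lop^[j] φ)) (t, x))^2))
        ≤ ((5*((B^2+1)/2)+1) + ((B^2+1)/2) + 1) * (δ^2 * M^2) := by
      have hI0 : Integrable (fun x => (5*((B^2+1)/2)+1) * (Lam γ (ubar Ψ t x)
          * (Lop ((Lbar Ψ)^[i] (Lop^[j] φ)) (t, x))^2)) := hT0.1.const_mul _
      have hI1 : Integrable (fun x => ((B^2+1)/2) * (Lam γ (ubar Ψ t x)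
          * (Lop ((Lbar Ψ)^[i] (Lop^[j+1] φ)) (t, x))^2)) := hT1.1.const_mul _
      have hI01 : Integrable (fun x => (5*((B^2+1)/2)+1) * (Lam γ (ubar Ψ t x)
          * (Lop ((Lbar Ψ)^[i] (Lop^[j] φ)) (t, x))^2)
          + ((B^2+1)/2) * (Lam γ (ubar Ψ t x)
          * (Lop ((Lbar Ψ)^[i] (Lop^[j+1] φ)) (t, x))^2)) := hI0.add hI1
      rw [integral_add hI01 hT2.1, integral_add hI0 hI1,
        integral_const_mul, integral_const_mul]
      have b0 := mul_le_mul_of_nonneg_left hT0.2 (by positivity : (0:ℝ) ≤ 5*((B^2+1)/2)+1)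
      have b1 := mul_le_mul_of_nonneg_left hT1.2 hamax
      linarith [hT2.2]
    have hfinal : Lam γ (ubar Ψ t x₀) * (Lop ((Lbar Ψ)^[i] (Lop^[j] φ)) (t, x₀))^2
        ≤ ((3*B+3)*δ*M)^2 := by
      refine (hkey.trans hDbound).trans ?_
      have hcoef : (5*((B^2+1)/2)+1) + ((B^2+1)/2) + 1 ≤ (3*B+3)^2 := by nlinarith
      have hpos : (0:ℝ) < δ^2*M^2 := by positivity
      nlinarith [mul_le_mul_of_nonneg_right hcoef (le_of_lt hpos)]
    -- conclude
    have hsq : Real.sqrt (Lam γ (ubar Ψ t x₀))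
        * |Lop ((Lbar Ψ)^[i] (Lop^[j] φ)) (t, x₀)| ≤ (3*B+3)*δ*M := by
      have h1 := Real.sqrt_le_sqrt hfinal
      rw [Real.sqrt_mul (le_of_lt (lam_pos γ _)), Real.sqrt_sq_eq_abs, Real.sqrt_sq
        (by positivity)] at h1
      exact h1
    have hspos : 0 < Real.sqrt (Lam γ (ubar Ψ t x₀)) := Real.sqrt_pos.mpr (lam_pos γ _)
    rw [le_mul_inv_iff₀ hspos]
    linarith [hsq, mul_comm (Real.sqrt (Lam γ (ubar Ψ t x₀)))
      (abs (Lop ((Lbar Ψ)^[i] (Lop^[j] φ)) (t, x₀)))]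
  · -- ### second bound : |L̄ w| ≤ C M Λ(u)^{-1/2}
    have hT0 := int_bound (v := fun x => Lam γ (t - x)
        * (Lbar Ψ ((Lbar Ψ)^[i] (Lop^[j] φ)) (t, x))^2)
      (hcΛ2.mul ((hcV i j).pow 2))
      (fun x => mul_nonneg (le_of_lt (lam_pos γ _)) (sq_nonneg _))
      (by positivity) (hEn i j hij1).2
    have hT1 := int_bound (v := fun x => Lam γ (t - x)
        * (Lbar Ψ ((Lbar Ψ)^[i] (Lop^[j+1] φ)) (t, x))^2)
      (hcΛ2.mul ((hcV i (j+1)).pow 2))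
      (fun x => mul_nonneg (le_of_lt (lam_pos γ _)) (sq_nonneg _))
      (by positivity) (hEn i (j+1) hij2).2
    have hT2 := int_bound (v := fun x => Lam γ (t - x)
        * (Lbar Ψ ((Lbar Ψ)^[i+1] (Lop^[j] φ)) (t, x))^2)
      (hcΛ2.mul ((hcV (i+1) j).pow 2))
      (fun x => mul_nonneg (le_of_lt (lam_pos γ _)) (sq_nonneg _))
      (by positivity) (hEn (i+1) j hij3).2
    -- commutation identities
    have hid1 : ∀ x : ℝ, Lop (Lbar Ψ ((Lbar Ψ)^[i] (Lop^[j] φ))) (t, x)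
        = Lbar Ψ ((Lbar Ψ)^[i] (Lop^[j+1] φ)) (t, x) := by
      intro x
      have h1 : Lop (Lbar Ψ ((Lbar Ψ)^[i] (Lop^[j] φ))) (t, x)
          = Lbar Ψ (Lop ((Lbar Ψ)^[i] (Lop^[j] φ))) (t, x) :=
        Lop_Lbar_comm hΨ (hword i j 2 x)
      rw [h1]
      exact Lbar_congr_nhds (key_comm hΨ (hφ x))
    have hid2 : ∀ x : ℝ, Lbar Ψ (Lbar Ψ ((Lbar Ψ)^[i] (Lop^[j] φ))) (t, x)
        = Lbar Ψ ((Lbar Ψ)^[i+1] (Lop^[j] φ)) (t, x) := by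
      intro x
      rw [Function.iterate_succ_apply' (Lbar Ψ) i (Lop^[j] φ)]
    -- derivative of the energy density along the slice
    have hderiv : ∀ x : ℝ, HasDerivAt
        (fun y => Lam γ (t - y) * (Lbar Ψ ((Lbar Ψ)^[i] (Lop^[j] φ)) (t, y))^2)
        (-dLam γ (t - x) * (Lbar Ψ ((Lbar Ψ)^[i] (Lop^[j] φ)) (t, x))^2
          + Lam γ (t - x) * (2 * Lbar Ψ ((Lbar Ψ)^[i] (Lop^[j] φ)) (t, x)
            * (((deriv Ψ (t - x))^2 + 1)/2 * Lbar Ψ ((Lbar Ψ)^[i] (Lop^[j+1] φ)) (t, x)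
              - Lbar Ψ ((Lbar Ψ)^[i+1] (Lop^[j] φ)) (t, x)))) x := by
      intro x
      have hΛd : HasDerivAt (fun y => Lam γ (t - y)) (-dLam γ (t - x)) x := by
        have := (lam_hasDerivAt γ (t - x)).comp x ((hasDerivAt_id x).const_sub t)
        refine this.congr_deriv ?_
        simp
      have hdiff : DifferentiableAt ℝ (Lbar Ψ ((Lbar Ψ)^[i] (Lop^[j] φ))) (t, x) :=
        (contDiffAt_Lbar hΨ (n := 1) (hword i j 2 x)).differentiableAt (by norm_num)
      have hVd : HasDerivAt (fun y => Lbar Ψ ((Lbar Ψ)^[i] (Lop^[j] φ)) (t, y))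
          (pd2 (Lbar Ψ ((Lbar Ψ)^[i] (Lop^[j] φ))) (t, x)) x := pd2_hasDerivAt hdiff
      have hpd2 : pd2 (Lbar Ψ ((Lbar Ψ)^[i] (Lop^[j] φ))) (t, x)
          = ((deriv Ψ (t - x))^2 + 1)/2 * Lbar Ψ ((Lbar Ψ)^[i] (Lop^[j+1] φ)) (t, x)
            - Lbar Ψ ((Lbar Ψ)^[i+1] (Lop^[j] φ)) (t, x) := by
        rw [pd2_eq_comb Ψ, hid1 x, hid2 x]
      rw [hpd2] at hVd
      have := hΛd.mul (hVd.pow 2)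
      refine this.congr_deriv ?_
      push_cast [Pi.pow_apply]
      ring
    -- pointwise bound on the derivative
    have hbd : ∀ x : ℝ,
        |-dLam γ (t - x) * (Lbar Ψ ((Lbar Ψ)^[i] (Lop^[j] φ)) (t, x))^2
          + Lam γ (t - x) * (2 * Lbar Ψ ((Lbar Ψ)^[i] (Lop^[j] φ)) (t, x)
            * (((deriv Ψ (t - x))^2 + 1)/2 * Lbar Ψ ((Lbar Ψ)^[i] (Lop^[j+1] φ)) (t, x)
              - Lbar Ψ ((Lbar Ψ)^[i+1] (Lop^[j] φ)) (t, x)))|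
        ≤ (((B^2+1)/2)+5) * (Lam γ (t - x)
              * (Lbar Ψ ((Lbar Ψ)^[i] (Lop^[j] φ)) (t, x))^2)
          + ((B^2+1)/2) * (Lam γ (t - x)
              * (Lbar Ψ ((Lbar Ψ)^[i] (Lop^[j+1] φ)) (t, x))^2)
          + (Lam γ (t - x) * (Lbar Ψ ((Lbar Ψ)^[i+1] (Lop^[j] φ)) (t, x))^2) := by
      intro x
      set Z := Lam γ (t - x) with hZ
      set a := ((deriv Ψ (t - x))^2 + 1)/2 with ha
      set W := Lbar Ψ ((Lbar Ψ)^[i] (Lop^[j] φ)) (t, x) with hW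
      set P := Lbar Ψ ((Lbar Ψ)^[i] (Lop^[j+1] φ)) (t, x) with hP
      set Q := Lbar Ψ ((Lbar Ψ)^[i+1] (Lop^[j] φ)) (t, x) with hQ
      have hZpos : 0 < Z := lam_pos γ _
      have hdl : |dLam γ (t - x)| ≤ 4 * Z := abs_dLam_le hγ0 hγ1 _
      have ha1 : 0 ≤ a := ha_nonneg _
      have ha2 : a ≤ (B^2+1)/2 := ha_le _
      have e1 : |(-dLam γ (t - x)) * W^2| ≤ 4 * (Z * W^2) := by
        rw [abs_mul, abs_neg, abs_of_nonneg (sq_nonneg W)]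
        linarith [mul_le_mul_of_nonneg_right hdl (sq_nonneg W)]
      have e2 : |Z * (2 * W * (a * P - Q))| ≤
          Z * (((B^2+1)/2) * (W^2 + P^2) + (W^2 + Q^2)) := by
        rw [abs_mul, abs_of_nonneg (le_of_lt hZpos)]
        apply mul_le_mul_of_nonneg_left _ (le_of_lt hZpos)
        have h2 : |2 * W * (a * P - Q)| ≤ 2 * abs W * (a * abs P + abs Q) := by
          rw [abs_mul, abs_mul, abs_two]
          apply mul_le_mul_of_nonneg_left _ (by positivity : (0:ℝ) ≤ 2 * abs W)
          calc |a * P - Q| ≤ |a * P| + |Q| := abs_sub _ _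
            _ = a * abs P + abs Q := by rw [abs_mul, abs_of_nonneg ha1]
        refine h2.trans ?_
        have k1 : 2 * abs W * abs P ≤ W^2 + P^2 := by
          have h := two_mul_le_add_sq (abs W) (abs P); rwa [sq_abs, sq_abs] at h
        have k2 : 2 * abs W * abs Q ≤ W^2 + Q^2 := by
          have h := two_mul_le_add_sq (abs W) (abs Q); rwa [sq_abs, sq_abs] at h
        have hWP : (0:ℝ) ≤ W^2 + P^2 := by positivity
        calc 2 * abs W * (a * abs P + abs Q)
            = a * (2 * abs W * abs P) + 2 * abs W * abs Q := by ring
          _ ≤ a * (W^2 + P^2) + (W^2 + Q^2) :=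
              add_le_add (mul_le_mul_of_nonneg_left k1 ha1) k2
          _ ≤ (B^2+1)/2 * (W^2 + P^2) + (W^2 + Q^2) :=
              add_le_add_left (mul_le_mul_of_nonneg_right ha2 hWP) _
      calc |(-dLam γ (t - x)) * W^2 + Z * (2 * W * (a * P - Q))|
          ≤ |(-dLam γ (t - x)) * W^2| + |Z * (2 * W * (a * P - Q))| := abs_add_le _ _
        _ ≤ 4 * (Z * W^2)
            + Z * (((B^2+1)/2) * (W^2 + P^2) + (W^2 + Q^2)) := add_le_add e1 e2
        _ = (((B^2+1)/2)+5) * (Z * W^2) + ((B^2+1)/2) * (Z * P^2) + (Z * Q^2) := by ring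
    -- integrable dominating function
    have hDint : Integrable (fun x =>
        (((B^2+1)/2)+5) * (Lam γ (t - x)
            * (Lbar Ψ ((Lbar Ψ)^[i] (Lop^[j] φ)) (t, x))^2)
        + ((B^2+1)/2) * (Lam γ (t - x)
            * (Lbar Ψ ((Lbar Ψ)^[i] (Lop^[j+1] φ)) (t, x))^2)
        + (Lam γ (t - x) * (Lbar Ψ ((Lbar Ψ)^[i+1] (Lop^[j] φ)) (t, x))^2)) :=
      ((hT0.1.const_mul _).add (hT1.1.const_mul _)).add hT2.1
    -- limit at -∞
    have htend : Tendsto (fun x => Lam γ (t - x)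
        * (Lbar Ψ ((Lbar Ψ)^[i] (Lop^[j] φ)) (t, x))^2) atBot (nhds 0) := by
      have hd := (hDec i j hij).2
      have heq : (fun x => Lam γ (t - x)
          * (Lbar Ψ ((Lbar Ψ)^[i] (Lop^[j] φ)) (t, x))^2)
          = fun x => (Real.sqrt (Lam γ (t - x))
            * |Lbar Ψ ((Lbar Ψ)^[i] (Lop^[j] φ)) (t, x)|)^2 := by
        funext x
        rw [mul_pow, Real.sq_sqrt (le_of_lt (lam_pos γ _)), sq_abs]
      rw [heq]
      simpa using hd.pow 2
    -- continuity of the derivative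
    have hcder : Continuous (fun x =>
        -dLam γ (t - x) * (Lbar Ψ ((Lbar Ψ)^[i] (Lop^[j] φ)) (t, x))^2
          + Lam γ (t - x) * (2 * Lbar Ψ ((Lbar Ψ)^[i] (Lop^[j] φ)) (t, x)
            * (((deriv Ψ (t - x))^2 + 1)/2 * Lbar Ψ ((Lbar Ψ)^[i] (Lop^[j+1] φ)) (t, x)
              - Lbar Ψ ((Lbar Ψ)^[i+1] (Lop^[j] φ)) (t, x)))) := by
      exact ((hcdΛ2.neg).mul ((hcV i j).pow 2)).add
        (hcΛ2.mul ((continuous_const.mul (hcV i j)).mul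
          ((hca.mul (hcV i (j+1))).sub (hcV (i+1) j))))
    -- FTC bound
    have hkey := ftc_bound_Iic hDint hderiv hcder hbd htend x₀
    -- bound on the integral of the dominating function
    have hDbound : ∫ x : ℝ, ((((B^2+1)/2)+5) * (Lam γ (t - x)
            * (Lbar Ψ ((Lbar Ψ)^[i] (Lop^[j] φ)) (t, x))^2)
        + ((B^2+1)/2) * (Lam γ (t - x)
            * (Lbar Ψ ((Lbar Ψ)^[i] (Lop^[j+1] φ)) (t, x))^2)
        + (Lam γ (t - x) * (Lbar Ψ ((Lbar Ψ)^[i+1] (Lop^[j] φ)) (t, x))^2))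
        ≤ ((((B^2+1)/2)+5) + ((B^2+1)/2) + 1) * (M^2) := by
      have hI0 : Integrable (fun x => (((B^2+1)/2)+5) * (Lam γ (t - x)
          * (Lbar Ψ ((Lbar Ψ)^[i] (Lop^[j] φ)) (t, x))^2)) := hT0.1.const_mul _
      have hI1 : Integrable (fun x => ((B^2+1)/2) * (Lam γ (t - x)
          * (Lbar Ψ ((Lbar Ψ)^[i] (Lop^[j+1] φ)) (t, x))^2)) := hT1.1.const_mul _
      have hI01 : Integrable (fun x => (((B^2+1)/2)+5) * (Lam γ (t - x)
          * (Lbar Ψ ((Lbar Ψ)^[i] (Lop^[j] φ)) (t, x))^2)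
          + ((B^2+1)/2) * (Lam γ (t - x)
          * (Lbar Ψ ((Lbar Ψ)^[i] (Lop^[j+1] φ)) (t, x))^2)) := hI0.add hI1
      rw [integral_add hI01 hT2.1, integral_add hI0 hI1,
        integral_const_mul, integral_const_mul]
      have b0 := mul_le_mul_of_nonneg_left hT0.2 (by positivity : (0:ℝ) ≤ ((B^2+1)/2)+5)
      have b1 := mul_le_mul_of_nonneg_left hT1.2 hamax
      linarith [hT2.2]
    have hfinal : Lam γ (t - x₀) * (Lbar Ψ ((Lbar Ψ)^[i] (Lop^[j] φ)) (t, x₀))^2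
        ≤ ((3*B+3)*M)^2 := by
      refine (hkey.trans hDbound).trans ?_
      have hcoef : (((B^2+1)/2)+5) + ((B^2+1)/2) + 1 ≤ (3*B+3)^2 := by nlinarith
      have hpos : (0:ℝ) < M^2 := by positivity
      nlinarith [mul_le_mul_of_nonneg_right hcoef (le_of_lt hpos)]
    have hsq : Real.sqrt (Lam γ (t - x₀))
        * |Lbar Ψ ((Lbar Ψ)^[i] (Lop^[j] φ)) (t, x₀)| ≤ (3*B+3)*M := by
      have h1 := Real.sqrt_le_sqrt hfinal
      rw [Real.sqrt_mul (le_of_lt (lam_pos γ _)), Real.sqrt_sq_eq_abs, Real.sqrt_sq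
        (by positivity)] at h1
      exact h1
    have hspos : 0 < Real.sqrt (Lam γ (t - x₀)) := Real.sqrt_pos.mpr (lam_pos γ _)
    rw [le_mul_inv_iff₀ hspos]
    linarith [hsq, mul_comm (Real.sqrt (Lam γ (t - x₀)))
      (abs (Lbar Ψ ((Lbar Ψ)^[i] (Lop^[j] φ)) (t, x₀)))]
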